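/- Let A be a ℤ-graded associative ℂ-algebra, let r ∈ ℂ^× not be a root of unity, and let h ∈ A_0 satisfy h·x = r^i · x·h for every i ∈ ℤ and x ∈ A_i. Let I be a two-sided ideal of A and x ∈ I with homogeneous decomposition x = Σ_i x_i (x_i ∈ A_i) of length ℓ(x) (the number of nonzero components). Then x_i · h^{ℓ(x)−1} ∈ I for every i ∈ ℤ. -/
import Mathlib

open DirectSum

private lemma zpow_ne_one_aux {r : ℂ} (hr : r ≠ 0) (hru : ∀ k : ℕ, 0 < k → r ^ k ≠ 1)
    {m : ℤ} (hm : m ≠ 0) : r ^ m ≠ 1 := by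
  rcases lt_trichotomy m 0 with hlt | he | hgt
  · intro hc
    have h1 : r ^ (-m) = 1 := by
      rw [zpow_neg, hc, inv_one]
    have := hru (-m).toNat (by omega)
    rw [← zpow_natCast, Int.toNat_of_nonneg (by omega)] at this
    exact this h1
  · exact absurd he hm
  · intro hc
    have := hru m.toNat (by omega)
    rw [← zpow_natCast, Int.toNat_of_nonneg (by omega)] at this
    exact this hc

theorem stmt14 {A : Type*} [Ring A] [Algebra ℂ A] (𝒜 : ℤ → Submodule ℂ A)
    [GradedAlgebra 𝒜] [∀ (i : ℤ) (y : 𝒜 i), Decidable (y ≠ 0)]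
    (r : ℂ) (hr : r ≠ 0) (hru : ∀ k : ℕ, 0 < k → r ^ k ≠ 1)
    (h : A) (hh : h ∈ 𝒜 0)
    (hcomm : ∀ (i : ℤ), ∀ x ∈ 𝒜 i, h * x = (r ^ i) • (x * h))
    (I : TwoSidedIdeal A) (x : A) (hx : x ∈ I) :
    ∀ i : ℤ, (DirectSum.decompose 𝒜 x i : A) *
      h ^ ((DirectSum.decompose 𝒜 x).support.card - 1) ∈ I := by
  -- general scalar lemma
  have smul_mem : ∀ (c : ℂ) (a : A), a ∈ I → c • a ∈ I := by
    intro c a ha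
    rw [Algebra.smul_def]
    exact I.mul_mem_left _ _ ha
  have smul_mem_iff : ∀ (c : ℂ) (a : A), c ≠ 0 → (c • a ∈ I ↔ a ∈ I) := by
    intro c a hc
    constructor
    · intro hca
      have := smul_mem c⁻¹ _ hca
      rwa [smul_smul, inv_mul_cancel₀ hc, one_smul] at this
    · exact smul_mem c a
  -- main auxiliary claim, by induction on n
  suffices H : ∀ n : ℕ, ∀ x : A, x ∈ I → (DirectSum.decompose 𝒜 x).support.card ≤ n →
      ∀ i : ℤ, (DirectSum.decompose 𝒜 x i : A) * h ^ (n - 1) ∈ I by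
    intro i
    exact H _ x hx le_rfl i
  intro n
  induction n with
  | zero =>
      intro x hxI hcard i
      have hsupp : (DirectSum.decompose 𝒜 x).support = ∅ := by
        exact Finset.card_eq_zero.mp (Nat.le_zero.mp hcard)
      have : DirectSum.decompose 𝒜 x i = 0 := by
        have : i ∉ (DirectSum.decompose 𝒜 x).support := by simp [hsupp]
        exact DFinsupp.notMem_support_iff.mp this
      rw [this]
      simpa using I.zero_mem
  | succ n ih =>
      intro x hxI hcard i
      by_cases hcase : (DirectSum.decompose 𝒜 x).support.card ≤ 1
      · -- x is homogeneous (or zero)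
        by_cases hi : i ∈ (DirectSum.decompose 𝒜 x).support
        · have hsupp : (DirectSum.decompose 𝒜 x).support = {i} :=
            Finset.eq_singleton_iff_unique_mem.mpr ⟨hi, fun j hj => by
              by_contra hne
              have : 1 < (DirectSum.decompose 𝒜 x).support.card :=
                Finset.one_lt_card.mpr ⟨j, hj, i, hi, hne⟩
              omega⟩
          have hxeq : (DirectSum.decompose 𝒜 x i : A) = x := by
            conv_rhs => rw [← DirectSum.sum_support_decompose 𝒜 x]
            rw [hsupp, Finset.sum_singleton]
          rw [hxeq]
          exact I.mul_mem_right _ _ hxI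
        · have : DirectSum.decompose 𝒜 x i = 0 := DFinsupp.notMem_support_iff.mp hi
          rw [this]
          simpa using I.zero_mem
      · -- support has at least 2 elements: pick j ∈ support with j ≠ i
        push_neg at hcase
        obtain ⟨j, hj, hji⟩ : ∃ j ∈ (DirectSum.decompose 𝒜 x).support, j ≠ i := by
          rcases Finset.one_lt_card.mp hcase with ⟨a, ha, b, hb, hab⟩
          by_cases hai : a = i
          · exact ⟨b, hb, by rw [← hai]; exact fun hbi => hab hbi.symm⟩
          · exact ⟨a, ha, hai⟩
        set y : A := h * x - (r ^ j) • (x * h) with hy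
        have hyI : y ∈ I := by
          apply I.sub_mem (I.mul_mem_left _ _ hxI)
          exact smul_mem _ _ (I.mul_mem_right _ _ hxI)
        -- component formula for y
        have hcomp : ∀ k : ℤ, (DirectSum.decompose 𝒜 y k : A) =
            (r ^ k - r ^ j) • ((DirectSum.decompose 𝒜 x k : A) * h) := by
          intro k
          have h1 : (DirectSum.decompose 𝒜 (h * x) k : A) = h * (DirectSum.decompose 𝒜 x k : A) := by
            have := DirectSum.coe_decompose_mul_add_of_left_mem 𝒜 (b := x) (j := k) hh
            rwa [zero_add] at this
          have h2 : (DirectSum.decompose 𝒜 (x * h) k : A) = (DirectSum.decompose 𝒜 x k : A) * h := by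
            have := DirectSum.coe_decompose_mul_add_of_right_mem 𝒜 (a := x) (i := k) hh
            rwa [add_zero] at this
          have : (DirectSum.decompose 𝒜 y k : A) =
              (DirectSum.decompose 𝒜 (h * x) k : A) - r ^ j • (DirectSum.decompose 𝒜 (x * h) k : A) := by
            rw [hy, DirectSum.decompose_sub, DirectSum.decompose_smul]
            simp [DirectSum.smul_apply]
          rw [this, h1, h2, hcomm k _ (SetLike.coe_mem _), sub_smul]
        -- support of y is contained in support of x minus j
        have hysupp : (DirectSum.decompose 𝒜 y).support ⊆
            (DirectSum.decompose 𝒜 x).support.erase j := by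
          intro k hk
          have hk' := DFinsupp.mem_support_iff.mp hk
          rw [Finset.mem_erase]
          constructor
          · rintro rfl
            apply hk'
            have := hcomp k
            rw [sub_self, zero_smul] at this
            exact Subtype.ext this
          · rw [DFinsupp.mem_support_iff]
            intro hzero
            apply hk'
            have := hcomp k
            rw [hzero] at this
            simp only [ZeroMemClass.coe_zero, zero_mul, smul_zero] at this
            exact Subtype.ext this
        have hycard : (DirectSum.decompose 𝒜 y).support.card ≤ n := by
          have := Finset.card_le_card hysupp
          have h2 := Finset.card_erase_of_mem hj
          omega
        have key := ih y hyI hycard i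
        rw [hcomp i, smul_mul_assoc] at key
        have hne : r ^ i - r ^ j ≠ 0 := by
          intro hc
          have : r ^ (j - i) = 1 := by
            have : r ^ i = r ^ j := by linear_combination hc
            rw [zpow_sub₀ hr, ← this, div_self (zpow_ne_zero _ hr)]
          exact zpow_ne_one_aux hr hru (by omega) this
        rw [smul_mem_iff _ _ hne] at key
        have hexp : n + 1 - 1 = (n - 1) + 1 := by omega
        rw [hexp, pow_succ', ← mul_assoc]
        exact key
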